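/- arXiv:2302.00491 — 4 statements merged into one kernel-verified Lean document; each statement's English description precedes it below -/
import Mathlib

section
/- Let d, K be positive integers, x ∈ ℝ^d, prototypes c_1,…,c_K ∈ ℝ^d with x ≠ c_z for every z, posterior p(z|x) = exp(−½‖x−c_z‖) / Σ_{z'} exp(−½‖x−c_{z'}‖), and loss L_{xy} = −log p(y|x). Then the Euclidean norm of the gradient of L_{xy} with respect to the label's own prototype c_y equals ½·(1 − p(y|x)), i.e., it is proportional to the misclassification probability of the sample and independent of the distance ‖x − c_y‖. -/
open Real

lemma hasGradientAt_norm_sub {E : Type*} [NormedAddCommGroup E] [InnerProductSpace ℝ E]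
    [CompleteSpace E] (x u : E) (h : x ≠ u) :
    HasGradientAt (fun w => ‖x - w‖) (‖x - u‖⁻¹ • (u - x)) u := by
  have ha : x - u ≠ 0 := sub_ne_zero.2 h
  have ha' : ‖x - u‖ ≠ 0 := norm_ne_zero_iff.2 ha
  have h1 : HasFDerivAt (fun w : E => x - w) (-(ContinuousLinearMap.id ℝ E)) u :=
    (hasFDerivAt_id u).const_sub x
  have h2 := h1.norm_sq
  have h3 : HasDerivAt Real.sqrt (1/(2*Real.sqrt (‖x-u‖^2))) (‖x - u‖^2) :=
    Real.hasDerivAt_sqrt (by positivity)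
  have h4 := h3.comp_hasFDerivAt u h2
  have hfun : (fun w : E => Real.sqrt (‖x - w‖^2)) = fun w => ‖x - w‖ :=
    funext fun w => Real.sqrt_sq (norm_nonneg _)
  have h5 : HasFDerivAt (fun w : E => ‖x - w‖)
    ((1 / (2 * Real.sqrt (‖x - u‖ ^ 2))) • 2 • ((innerSL ℝ) (x - u)).comp (-ContinuousLinearMap.id ℝ E)) u := by
    refine h4.congr_of_eventuallyEq ?_
    filter_upwards with w
    simp [Real.sqrt_sq (norm_nonneg (x - w))]
  rw [hasGradientAt_iff_hasFDerivAt]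
  refine h5.congr_fderiv ?_
  ext v
  simp only [InnerProductSpace.toDual_apply_apply, ContinuousLinearMap.smul_apply,
    ContinuousLinearMap.smul_apply, ContinuousLinearMap.coe_smul', Pi.smul_apply,
    ContinuousLinearMap.comp_apply, ContinuousLinearMap.neg_apply,
    ContinuousLinearMap.id_apply, innerSL_apply_apply, real_inner_smul_left,
    Real.sqrt_sq (norm_nonneg (x - u)), smul_eq_mul]
  rw [show (u - x : E) = -(x - u) by abel, inner_neg_left, inner_neg_right]
  field_simp
  ring

open BigOperators
set_option maxHeartbeats 1000000

/-- For the Euclidean-distance prototype classifier, the Euclidean norm of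
the gradient of the NLL loss `L_{xy}` with respect to the label's own prototype `c_y`
equals `½ (1 - p(y|x))`: it is proportional to the misclassification probability and
independent of the distance `‖x - c_y‖`. -/
theorem prototype_gradient_norm_own_class
    (d K : ℕ) (hd : 0 < d) (hK : 0 < K)
    (x : EuclideanSpace ℝ (Fin d)) (c : Fin K → EuclideanSpace ℝ (Fin d))
    (hx : ∀ z, x ≠ c z) (y : Fin K)
    (p : Fin K → ℝ)
    (hp : ∀ z, p z =
      Real.exp (-(1 / 2) * ‖x - c z‖) / ∑ z', Real.exp (-(1 / 2) * ‖x - c z'‖)) :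
    ‖gradient (fun w : EuclideanSpace ℝ (Fin d) =>
        -Real.log (Real.exp (-(1 / 2) * ‖x - Function.update c y w y‖) /
          ∑ z', Real.exp (-(1 / 2) * ‖x - Function.update c y w z'‖))) (c y)‖
      = (1 / 2) * (1 - p y) := by
  have hne : x ≠ c y := hx y
  set t0 : ℝ := ‖x - c y‖ with ht0def
  have ht0 : 0 < t0 := norm_pos_iff.2 (sub_ne_zero.2 hne)
  set S : ℝ := ∑ z' ∈ Finset.univ.erase y, Real.exp (-(1/2) * ‖x - c z'‖) with hSdef
  have hS : 0 ≤ S := Finset.sum_nonneg fun _ _ => (Real.exp_pos _).le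
  set E0 : ℝ := Real.exp (-(1/2) * t0) with hE0def
  have hE0 : 0 < E0 := Real.exp_pos _
  have hES : 0 < E0 + S := by linarith
  -- split of the sum
  have hsum : ∀ w : EuclideanSpace ℝ (Fin d),
      (∑ z', Real.exp (-(1/2) * ‖x - Function.update c y w z'‖))
        = Real.exp (-(1/2) * ‖x - w‖) + S := by
    intro w
    rw [← Finset.add_sum_erase _ _ (Finset.mem_univ y), Function.update_self]
    congr 1
    refine Finset.sum_congr rfl fun z hz => ?_
    rw [Function.update_of_ne (Finset.ne_of_mem_erase hz)]
  -- rewrite the loss as φ(‖x - w‖)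
  have hfun : (fun w : EuclideanSpace ℝ (Fin d) =>
        -Real.log (Real.exp (-(1 / 2) * ‖x - Function.update c y w y‖) /
          ∑ z', Real.exp (-(1 / 2) * ‖x - Function.update c y w z'‖)))
      = fun w => (1/2) * ‖x - w‖ + Real.log (Real.exp (-(1/2) * ‖x - w‖) + S) := by
    funext w
    have hEw : (0:ℝ) < Real.exp (-(1/2) * ‖x - w‖) := Real.exp_pos _
    rw [Function.update_self, hsum w,
      Real.log_div (ne_of_gt hEw) (by positivity), Real.log_exp]
    ring
  -- derivative of the scalar function
  have hd1 : HasDerivAt (fun t : ℝ => -(1/2) * t) (-(1/2)) t0 := by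
    simpa using (hasDerivAt_id t0).const_mul (-(1/2) : ℝ)
  have hd4 : HasDerivAt (fun t : ℝ => Real.log (Real.exp (-(1/2) * t) + S))
      ((E0 * (-(1/2))) / (E0 + S)) t0 := (hd1.exp.add_const S).log (by positivity)
  have hφ : HasDerivAt (fun t : ℝ => (1/2) * t + Real.log (Real.exp (-(1/2) * t) + S))
      ((1/2) + (E0 * (-(1/2))) / (E0 + S)) t0 := by
    simpa [Pi.add_def] using (((hasDerivAt_id t0).const_mul (1/2 : ℝ)).add hd4)
  set D : ℝ := (1/2) + (E0 * (-(1/2))) / (E0 + S) with hDdef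
  -- gradient of the norm
  have hr := hasGradientAt_norm_sub x (c y) hne
  set g : EuclideanSpace ℝ (Fin d) := t0⁻¹ • (c y - x) with hgdef
  have hcomp : HasFDerivAt
      (fun w : EuclideanSpace ℝ (Fin d) =>
        (1/2) * ‖x - w‖ + Real.log (Real.exp (-(1/2) * ‖x - w‖) + S))
      (D • (InnerProductSpace.toDual ℝ _ g)) (c y) :=
    by exact hφ.comp_hasFDerivAt (c y) hr.hasFDerivAt
  have hgrad : HasGradientAt
      (fun w : EuclideanSpace ℝ (Fin d) =>
        (1/2) * ‖x - w‖ + Real.log (Real.exp (-(1/2) * ‖x - w‖) + S))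
      (D • g) (c y) := by
    rw [hasGradientAt_iff_hasFDerivAt, map_smul]
    exact hcomp
  -- p y
  have hpy : p y = E0 / (E0 + S) := by
    rw [hp y, ← Finset.add_sum_erase _ _ (Finset.mem_univ y)]
  have hD : D = (1/2) * (1 - p y) := by
    rw [hDdef, hpy]
    field_simp
    ring
  have hDnn : 0 ≤ D := by
    rw [hD, hpy]
    have : E0 / (E0 + S) ≤ 1 := by
      rw [div_le_one hES]; linarith
    nlinarith
  rw [hfun, hgrad.gradient, norm_smul, Real.norm_eq_abs, abs_of_nonneg hDnn, hgdef,
    norm_smul, norm_inv, Real.norm_eq_abs, abs_of_nonneg ht0.le,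
    norm_sub_rev, ← ht0def, inv_mul_cancel₀ (ne_of_gt ht0), mul_one, hD]
end

section
/- Let d, K be positive integers, x ∈ ℝ^d, prototypes c_1,…,c_K ∈ ℝ^d with x ≠ c_z for every z, posterior p(z|x) = exp(−½‖x−c_z‖) / Σ_{z'} exp(−½‖x−c_{z'}‖), and loss L_{xy} = −log p(y|x). Then for every class z ≠ y, the Euclidean norm of the gradient of L_{xy} with respect to c_z equals ½·p(z|x), and in particular is independent of the distance ‖x − c_z‖. -/
open Real BigOperators

section Aux

variable {F : Type*} [NormedAddCommGroup F] [InnerProductSpace ℝ F] [CompleteSpace F]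

lemma hasFDerivAt_norm_sub (x v : F) (h : x ≠ v) :
    HasFDerivAt (fun w : F => ‖x - w‖)
      (InnerProductSpace.toDual ℝ F (-(‖x - v‖⁻¹ • (x - v)))) v := by
  have hv : x - v ≠ 0 := sub_ne_zero.mpr h
  have hr : ‖x - v‖ ≠ 0 := norm_ne_zero_iff.mpr hv
  have h0 : HasFDerivAt (fun w : F => x - w) (-(ContinuousLinearMap.id ℝ F)) v := by
    simpa [Pi.sub_def] using ((hasFDerivAt_const (𝕜 := ℝ) x v).sub (hasFDerivAt_id v))
  have hsq := h0.norm_sq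
  have hs : (‖x - v‖ ^ 2 : ℝ) ≠ 0 := pow_ne_zero _ hr
  have hsqrt := hsq.sqrt hs
  have hfun : (fun w : F => Real.sqrt (‖x - w‖ ^ 2)) = fun w : F => ‖x - w‖ := by
    funext w; exact Real.sqrt_sq (norm_nonneg _)
  rw [hfun] at hsqrt
  convert hsqrt using 1
  ext u
  simp only [InnerProductSpace.toDual_apply_apply, ContinuousLinearMap.smul_apply,
    ContinuousLinearMap.comp_apply, ContinuousLinearMap.neg_apply,
    ContinuousLinearMap.coe_id', id_eq, innerSL_apply_apply, inner_neg_left, inner_neg_right,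
    real_inner_smul_left, Real.sqrt_sq (norm_nonneg (x - v)), smul_eq_mul, two_smul,
    inner_sub_left, ContinuousLinearMap.add_apply]
  field_simp
  ring

end Aux


set_option maxHeartbeats 1000000 in
/-- For the Euclidean-distance prototype classifier, for every class
`z ≠ y` the Euclidean norm of the gradient of the NLL loss `L_{xy}` with respect to
`c_z` equals `½ p(z|x)`, independent of the distance `‖x - c_z‖`. -/
theorem prototype_gradient_norm_other_class
    (d K : ℕ) (hd : 0 < d) (hK : 0 < K)
    (x : EuclideanSpace ℝ (Fin d)) (c : Fin K → EuclideanSpace ℝ (Fin d))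
    (hx : ∀ z, x ≠ c z) (y : Fin K)
    (p : Fin K → ℝ)
    (hp : ∀ z, p z =
      Real.exp (-(1 / 2) * ‖x - c z‖) / ∑ z', Real.exp (-(1 / 2) * ‖x - c z'‖))
    (z : Fin K) (hzy : z ≠ y) :
    ‖gradient (fun w : EuclideanSpace ℝ (Fin d) =>
        -Real.log (Real.exp (-(1 / 2) * ‖x - Function.update c z w y‖) /
          ∑ z', Real.exp (-(1 / 2) * ‖x - Function.update c z w z'‖))) (c z)‖
      = (1 / 2) * p z := by
  classical
  set S₀ : ℝ := ∑ z' ∈ Finset.univ \ {z}, Real.exp (-(1 / 2) * ‖x - c z'‖) with hS₀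
  have hS₀nonneg : 0 ≤ S₀ := Finset.sum_nonneg fun _ _ => (Real.exp_pos _).le
  -- rewrite the sum
  have hsum : ∀ w : EuclideanSpace ℝ (Fin d), (∑ z', Real.exp (-(1 / 2) * ‖x - Function.update c z w z'‖))
      = Real.exp (-(1 / 2) * ‖x - w‖) + S₀ := by
    intro w
    have : ∀ z' : Fin K, Real.exp (-(1 / 2) * ‖x - Function.update c z w z'‖)
        = Function.update (fun j => Real.exp (-(1 / 2) * ‖x - c j‖)) z
            (Real.exp (-(1 / 2) * ‖x - w‖)) z' := by
      intro z'
      exact (Function.apply_update (fun _ v => Real.exp (-(1 / 2) * ‖x - v‖)) c z w z')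
    simp_rw [this]
    rw [Finset.sum_update_of_mem (Finset.mem_univ z)]
  -- rewrite the loss function
  have hfun : (fun w : EuclideanSpace ℝ (Fin d) =>
        -Real.log (Real.exp (-(1 / 2) * ‖x - Function.update c z w y‖) /
          ∑ z', Real.exp (-(1 / 2) * ‖x - Function.update c z w z'‖)))
      = fun w : EuclideanSpace ℝ (Fin d) => Real.log (Real.exp (-(1 / 2) * ‖x - w‖) + S₀) + (1 / 2) * ‖x - c y‖ := by
    funext w
    have hBpos : 0 < Real.exp (-(1 / 2) * ‖x - w‖) + S₀ :=
      lt_of_lt_of_le (Real.exp_pos _) (le_add_of_nonneg_right hS₀nonneg)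
    rw [Function.update_of_ne hzy.symm, hsum w,
      Real.log_div (Real.exp_ne_zero _) hBpos.ne', Real.log_exp]
    ring
  rw [hfun]
  -- set up derivative
  set v : EuclideanSpace ℝ (Fin d) := x - c z with hv
  have hvne : v ≠ 0 := sub_ne_zero.mpr (hx z)
  have hr : (0:ℝ) < ‖v‖ := norm_pos_iff.mpr hvne
  set r : ℝ := ‖v‖ with hrdef
  set B : ℝ := Real.exp (-(1 / 2) * r) + S₀ with hB
  have hBpos : 0 < B := lt_of_lt_of_le (Real.exp_pos _) (le_add_of_nonneg_right hS₀nonneg)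
  have h1 := hasFDerivAt_norm_sub x (c z) (hx z)
  have h2 := h1.const_mul (-(1/2) : ℝ)
  have h3 := h2.exp
  have h4 := h3.add_const S₀
  have h5 := h4.log (by simpa [hB] using hBpos.ne')
  have h6 := h5.add_const ((1 / 2) * ‖x - c y‖)
  -- identify the gradient vector
  set a : ℝ := B⁻¹ * Real.exp (-(1/2) * r) * (1/2) * r⁻¹ with ha
  have hCLM : (Real.exp (-(1 / 2) * ‖x - c z‖) + S₀)⁻¹ •
        (Real.exp (-(1 / 2) * ‖x - c z‖) •
          ((-(1 / 2) : ℝ) • InnerProductSpace.toDual ℝ (EuclideanSpace ℝ (Fin d)) (-(‖x - c z‖⁻¹ • (x - c z)))))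
      = InnerProductSpace.toDual ℝ (EuclideanSpace ℝ (Fin d)) (a • v) := by
    rw [← map_smul, ← map_smul, ← map_smul]
    congr 1
    rw [ha, hB, hrdef, hv]
    simp only [smul_neg, smul_smul]
    rw [← neg_smul]
    congr 1
    ring
  rw [hCLM] at h6
  have hgrad : HasGradientAt
      (fun w : EuclideanSpace ℝ (Fin d) =>
        Real.log (Real.exp (-(1 / 2) * ‖x - w‖) + S₀) + (1 / 2) * ‖x - c y‖)
      (a • v) (c z) := by
    simpa using h6.hasGradientAt
  rw [hgrad.gradient]
  have hapos : 0 < a := by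
    apply mul_pos (mul_pos (mul_pos (inv_pos.mpr hBpos) (Real.exp_pos _)) (by norm_num))
    exact inv_pos.mpr hr
  rw [norm_smul, Real.norm_eq_abs, abs_of_pos hapos, hp z]
  have hT : (∑ z', Real.exp (-(1 / 2) * ‖x - c z'‖)) = B := by
    have := hsum (c z)
    rw [Function.update_eq_self] at this
    rw [this, hB, hrdef, hv]
  have hfin : a * r = 1 / 2 * (Real.exp (-(1 / 2) * r) / B) := by
    have h1 : a * r = B⁻¹ * Real.exp (-(1/2) * r) * (1/2) * r⁻¹ * r := by rw [ha]
    rw [h1, mul_assoc _ r⁻¹ r, inv_mul_cancel₀ hr.ne', mul_one, div_eq_mul_inv]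
    ring
  rw [hT, ← hv, ← hrdef]
  exact hfin
end

section
/- Let d, K be positive integers, x ∈ ℝ^d, prototypes c_1,…,c_K ∈ ℝ^d with x ≠ c_z for every z, posterior p(z|x) = exp(−½‖x−c_z‖) / Σ_{z'} exp(−½‖x−c_{z'}‖), and loss L_{xy} = −log p(y|x). Then for every class z, the Euclidean norm of the gradient of L_{xy} with respect to c_z is at most ½; in particular the gradient norm is uniformly bounded over all samples x ∈ ℝ^d (robustness to outliers). -/
open Real BigOperators

/-- For the Euclidean-distance prototype classifier, for every class `z`
the Euclidean norm of the gradient of the NLL loss `L_{xy}` with respect to `c_z` is at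
most `½`; in particular (since `x` is universally quantified) the gradient norm is
uniformly bounded over all samples `x ∈ ℝ^d` (robustness to outliers). -/
theorem prototype_gradient_norm_bounded
    (d K : ℕ) (hd : 0 < d) (hK : 0 < K)
    (x : EuclideanSpace ℝ (Fin d)) (c : Fin K → EuclideanSpace ℝ (Fin d))
    (hx : ∀ z, x ≠ c z) (y : Fin K)
    (p : Fin K → ℝ)
    (hp : ∀ z, p z =
      Real.exp (-(1 / 2) * ‖x - c z‖) / ∑ z', Real.exp (-(1 / 2) * ‖x - c z'‖))
    (z : Fin K) :
    ‖gradient (fun w : EuclideanSpace ℝ (Fin d) =>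
        -Real.log (Real.exp (-(1 / 2) * ‖x - Function.update c z w y‖) /
          ∑ z', Real.exp (-(1 / 2) * ‖x - Function.update c z w z'‖))) (c z)‖
      ≤ 1 / 2 := by
  classical
  set r : ℝ := ‖x - c z‖ with hr_def
  have hxz : x - c z ≠ 0 := sub_ne_zero.mpr (hx z)
  have hr : 0 < r := norm_pos_iff.mpr hxz
  set A : ℝ := ∑ z' ∈ Finset.univ \ {z}, Real.exp (-(1 / 2) * ‖x - c z'‖) with hA_def
  have hA : 0 ≤ A := Finset.sum_nonneg fun _ _ => (Real.exp_pos _).le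
  set ε : ℝ := if y = z then 1 else 0 with hε_def
  set C : ℝ := if y = z then 0 else (1 / 2) * ‖x - c y‖ with hC_def
  set ψ : ℝ → ℝ := fun t => Real.log (Real.exp (-(1 / 2) * t) + A) + (ε * ((1 / 2) * t) + C)
    with hψ_def
  -- rewrite the loss as ψ ∘ (‖x - ·‖)
  have hsum : ∀ w : EuclideanSpace ℝ (Fin d), ∑ z', Real.exp (-(1 / 2) * ‖x - Function.update c z w z'‖)
      = Real.exp (-(1 / 2) * ‖x - w‖) + A := by
    intro w
    have : ∀ z', Real.exp (-(1 / 2) * ‖x - Function.update c z w z'‖)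
        = Function.update (fun z' => Real.exp (-(1 / 2) * ‖x - c z'‖)) z
            (Real.exp (-(1 / 2) * ‖x - w‖)) z' := by
      intro z'
      exact Function.apply_update (fun _ u => Real.exp (-(1 / 2) * ‖x - u‖)) c z w z'
    simp_rw [this]
    rw [Finset.sum_update_of_mem (Finset.mem_univ z)]
  have hfun : (fun w : EuclideanSpace ℝ (Fin d) =>
      -Real.log (Real.exp (-(1 / 2) * ‖x - Function.update c z w y‖) /
        ∑ z', Real.exp (-(1 / 2) * ‖x - Function.update c z w z'‖)))
      = fun w => ψ ‖x - w‖ := by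
    funext w
    have hD : (0:ℝ) < Real.exp (-(1 / 2) * ‖x - w‖) + A :=
      lt_of_lt_of_le (Real.exp_pos _) (le_add_of_nonneg_right hA)
    rw [hsum w, Real.log_div (Real.exp_ne_zero _) hD.ne', Real.log_exp]
    rcases eq_or_ne y z with h | h
    · subst h
      simp [hψ_def, hε_def, hC_def]
      try ring
    · simp [hψ_def, hε_def, hC_def, h]
      try ring
  rw [hfun]
  -- derivative of ψ at r
  set e : ℝ := Real.exp (-(1 / 2) * r) with he_def
  have he : 0 < e := Real.exp_pos _
  have hD : (0:ℝ) < e + A := lt_of_lt_of_le he (le_add_of_nonneg_right hA)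
  set a : ℝ := e * (-(1 / 2)) / (e + A) + ε * (1 / 2) with ha_def
  have hψ' : HasDerivAt ψ a r := by
    have h1 : HasDerivAt (fun t : ℝ => -(1 / 2) * t) (-(1 / 2)) r := by
      simpa using (hasDerivAt_id r).const_mul (-(1 / 2) : ℝ)
    have h2 : HasDerivAt (fun t : ℝ => Real.exp (-(1 / 2) * t) + A)
        (e * (-(1 / 2))) r := (h1.exp).add_const A
    have h3 : HasDerivAt (fun t : ℝ => Real.log (Real.exp (-(1 / 2) * t) + A))
        (e * (-(1 / 2)) / (e + A)) r := h2.log hD.ne'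
    have h4 : HasDerivAt (fun t : ℝ => ε * ((1 / 2) * t) + C) (ε * (1 / 2)) r := by
      simpa using (((hasDerivAt_id r).const_mul (1 / 2 : ℝ)).const_mul ε).add_const C
    exact h3.add h4
  -- gradient of the norm function
  have hnormsq : HasFDerivAt (fun w : EuclideanSpace ℝ (Fin d) => ‖x - w‖ ^ 2)
      (2 • (innerSL ℝ (x - c z)).comp (-(ContinuousLinearMap.id ℝ (EuclideanSpace ℝ (Fin d))))) (c z) :=
    HasFDerivAt.norm_sq ((hasFDerivAt_id (c z)).const_sub x)
  have hrsq : (‖x - c z‖ ^ 2 : ℝ) ≠ 0 := by positivity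
  have hsqrt := (Real.hasDerivAt_sqrt hrsq).comp_hasFDerivAt (c z) hnormsq
  have hnorm : HasFDerivAt (fun w : EuclideanSpace ℝ (Fin d) => ‖x - w‖)
      ((1 / (2 * Real.sqrt (‖x - c z‖ ^ 2))) •
        (2 • (innerSL ℝ (x - c z)).comp (-(ContinuousLinearMap.id ℝ (EuclideanSpace ℝ (Fin d)))))) (c z) := by
    have heq : (fun w : EuclideanSpace ℝ (Fin d) => ‖x - w‖) = fun w : EuclideanSpace ℝ (Fin d) => Real.sqrt (‖x - w‖ ^ 2) := by
      funext w; rw [Real.sqrt_sq (norm_nonneg _)]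
    rw [heq]; exact hsqrt
  have hcomp := hψ'.comp_hasFDerivAt (c z) hnorm
  -- the gradient
  set G : EuclideanSpace ℝ (Fin d) := (a * r⁻¹) • (c z - x) with hG_def
  have hG : HasGradientAt (fun w : EuclideanSpace ℝ (Fin d) => ψ ‖x - w‖) G (c z) := by
    rw [hasGradientAt_iff_hasFDerivAt]
    refine hcomp.congr_fderiv (Eq.symm ?_)
    apply ContinuousLinearMap.ext
    intro h
    have : Real.sqrt (‖x - c z‖ ^ 2) = r := Real.sqrt_sq (norm_nonneg _)
    simp [InnerProductSpace.toDual_apply_apply, this, hG_def, real_inner_smul_left,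
      inner_sub_left, inner_neg_right, real_inner_comm]
    ring
  rw [hG.gradient]
  have hnG : ‖G‖ = |a| := by
    rw [hG_def, norm_smul, norm_sub_rev]
    simp [abs_mul, abs_inv, abs_of_nonneg hr.le, ← hr_def]
    field_simp
  rw [hnG]
  have hq1 : e / (e + A) ≤ 1 := by
    rw [div_le_one hD]; linarith
  have hq0 : 0 < e / (e + A) := div_pos he hD
  have hq : e * (-(1 / 2)) / (e + A) = -(e / (e + A)) * (1 / 2) := by ring
  have hε01 : ε = 0 ∨ ε = 1 := by
    rcases eq_or_ne y z with h | h <;> simp [hε_def, h]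
  rw [abs_le, ha_def, hq]
  rcases hε01 with h | h <;> rw [h] <;> constructor <;> linarith
end

section
/- Let d, K ≥ 2 be positive integers, x ∈ ℝ^d, prototypes c_1,…,c_K ∈ ℝ^d with x ≠ c_z for every z, posterior p(z|x) = exp(−½‖x−c_z‖) / Σ_{z'} exp(−½‖x−c_{z'}‖), and loss L_{xy} = −log p(y|x). Then the sum over all classes of the gradient norms satisfies Σ_{z=1}^K ‖∇_{c_z} L_{xy}‖ = 1 − p(y|x) ≤ 1; that is, the total gradient magnitude distributed across all prototypes by a single sample equals its misclassification probability. -/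
open Real BigOperators

lemma hasGradientAt_comp_norm_sub {E : Type*} [NormedAddCommGroup E] [InnerProductSpace ℝ E]
    [CompleteSpace E]
    (x w0 : E) (h : x ≠ w0) (φ : ℝ → ℝ) (a : ℝ) (hφ : HasDerivAt φ a ‖x - w0‖) :
    HasGradientAt (fun w => φ ‖x - w‖) ((a * ‖x - w0‖⁻¹) • (w0 - x)) w0 := by
  have hv : x - w0 ≠ 0 := sub_ne_zero.mpr h
  have hr : (0:ℝ) < ‖x - w0‖ := norm_pos_iff.mpr hv
  have h2 : HasFDerivAt (fun v : E => ‖v‖ ^ 2) (2 • innerSL ℝ (x - w0)) (x - w0) :=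
    (hasStrictFDerivAt_norm_sq _).hasFDerivAt
  have hsq : HasDerivAt Real.sqrt (1 / (2 * Real.sqrt (‖x - w0‖^2))) (‖x - w0‖^2) :=
    Real.hasDerivAt_sqrt (by positivity)
  have h3 := hsq.comp_hasFDerivAt (x - w0) h2
  have hfun : (Real.sqrt ∘ fun v : E => ‖v‖ ^ 2) = fun v : E => ‖v‖ := by
    funext v; simp [Function.comp, Real.sqrt_sq (norm_nonneg v)]
  rw [hfun] at h3
  have hc : (1 / (2 * Real.sqrt (‖x - w0‖^2))) • (2 • innerSL ℝ (x - w0))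
      = ‖x - w0‖⁻¹ • innerSL ℝ (x - w0) := by
    ext v
    simp [ContinuousLinearMap.smul_apply, Real.sqrt_sq hr.le]
    field_simp
  rw [hc] at h3
  have h5 : HasFDerivAt (fun w : E => x - w) (-(ContinuousLinearMap.id ℝ E)) w0 :=
    (hasFDerivAt_id w0).const_sub x
  have h6 := h3.comp w0 h5
  have h7 := hφ.comp_hasFDerivAt w0 h6
  rw [hasGradientAt_iff_hasFDerivAt]
  refine HasFDerivAt.congr_fderiv h7 ?_
  ext v
  simp [InnerProductSpace.toDual_apply_apply, inner_smul_left, inner_sub_left, inner_neg_right,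
    Function.comp]
  ring

/-- For the Euclidean-distance prototype classifier with `K ≥ 2`, the sum
over all classes of the gradient norms of the NLL loss `L_{xy}` satisfies
`∑_{z=1}^K ‖∇_{c_z} L_{xy}‖ = 1 - p(y|x) ≤ 1`: the total gradient magnitude distributed
across all prototypes by a single sample equals its misclassification probability. -/
theorem prototype_total_gradient_norm
    (d K : ℕ) (hd : 0 < d) (hK : 2 ≤ K)
    (x : EuclideanSpace ℝ (Fin d)) (c : Fin K → EuclideanSpace ℝ (Fin d))
    (hx : ∀ z, x ≠ c z) (y : Fin K)
    (p : Fin K → ℝ)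
    (hp : ∀ z, p z =
      Real.exp (-(1 / 2) * ‖x - c z‖) / ∑ z', Real.exp (-(1 / 2) * ‖x - c z'‖)) :
    (∑ z : Fin K, ‖gradient (fun w : EuclideanSpace ℝ (Fin d) =>
        -Real.log (Real.exp (-(1 / 2) * ‖x - Function.update c z w y‖) /
          ∑ z', Real.exp (-(1 / 2) * ‖x - Function.update c z w z'‖))) (c z)‖)
      = 1 - p y ∧ 1 - p y ≤ 1 := by
  classical
  have hKpos : 0 < K := by omega
  haveI : Nonempty (Fin K) := Fin.pos_iff_nonempty.mp hKpos
  set Ez : Fin K → ℝ := fun z => Real.exp (-(1 / 2) * ‖x - c z‖) with hEz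
  set S : ℝ := ∑ z', Ez z' with hSdef
  have hEpos : ∀ z, 0 < Ez z := fun z => Real.exp_pos _
  have hSpos : 0 < S := Finset.sum_pos (fun z _ => hEpos z) Finset.univ_nonempty
  -- basic facts about p
  have hppos : ∀ z, 0 < p z := fun z => by
    rw [hp z]; exact div_pos (Real.exp_pos _) hSpos
  have hpsum : ∑ z, p z = 1 := by
    have : ∑ z, p z = (∑ z, Ez z) / S := by
      rw [Finset.sum_div]; exact Finset.sum_congr rfl fun z _ => hp z
    rw [this, ← hSdef, div_self hSpos.ne']
  have hple : ∀ z, p z ≤ 1 := fun z => by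
    rw [hp z]
    rw [div_le_one hSpos]
    exact Finset.single_le_sum (f := Ez) (fun i _ => (hEpos i).le) (Finset.mem_univ z)
  -- key: the gradient norm at each z
  have key : ∀ z : Fin K, ‖gradient (fun w : EuclideanSpace ℝ (Fin d) =>
        -Real.log (Real.exp (-(1 / 2) * ‖x - Function.update c z w y‖) /
          ∑ z', Real.exp (-(1 / 2) * ‖x - Function.update c z w z'‖))) (c z)‖
      = |(if z = y then (1/2 : ℝ) else 0) - (1/2) * p z| := by
    intro z
    set A : ℝ := ∑ z' ∈ Finset.univ \ {z}, Ez z' with hAdef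
    have hA : 0 ≤ A := Finset.sum_nonneg fun i _ => (hEpos i).le
    have hSA : Ez z + A = S := by
      rw [hSdef, hAdef, Finset.sum_eq_add_sum_sdiff_singleton_of_mem (Finset.mem_univ z) Ez]
    have hDen : ∀ w : EuclideanSpace ℝ (Fin d),
        (∑ z', Real.exp (-(1 / 2) * ‖x - Function.update c z w z'‖))
          = Real.exp (-(1 / 2) * ‖x - w‖) + A := by
      intro w
      have : (fun z' => Real.exp (-(1 / 2) * ‖x - Function.update c z w z'‖))
          = Function.update (fun z' => Ez z') z (Real.exp (-(1 / 2) * ‖x - w‖)) := by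
        funext z'
        rcases eq_or_ne z' z with h | h
        · subst h; simp [hEz]
        · simp [Function.update_of_ne h, hEz]
      rw [this, Finset.sum_update_of_mem (Finset.mem_univ z)]
    set φ : ℝ → ℝ := fun t => (if z = y then (1/2)*t else (1/2)*‖x - c y‖)
        + Real.log (Real.exp (-(1/2)*t) + A) with hφdef
    have hfun : (fun w : EuclideanSpace ℝ (Fin d) =>
        -Real.log (Real.exp (-(1 / 2) * ‖x - Function.update c z w y‖) /
          ∑ z', Real.exp (-(1 / 2) * ‖x - Function.update c z w z'‖)))
        = fun w => φ ‖x - w‖ := by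
      funext w
      have hDpos : 0 < Real.exp (-(1 / 2) * ‖x - w‖) + A :=
        lt_of_lt_of_le (Real.exp_pos _) (le_add_of_nonneg_right hA)
      rw [hDen w, Real.log_div (Real.exp_pos _).ne' hDpos.ne', Real.log_exp, hφdef]
      rcases eq_or_ne z y with h | h
      · subst h; simp [Function.update_self]; ring
      · rw [Function.update_of_ne (Ne.symm h)]
        simp [h]; ring
    set a : ℝ := (if z = y then (1/2 : ℝ) else 0) - (1/2) * p z with hadef
    have hφd : HasDerivAt φ a ‖x - c z‖ := by
      have h1 : HasDerivAt (fun t : ℝ => (if z = y then (1/2)*t else (1/2)*‖x - c y‖))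
          (if z = y then (1/2 : ℝ) else 0) ‖x - c z‖ := by
        rcases eq_or_ne z y with h | h
        · rw [h]
          simp only [if_pos rfl]
          simpa using (hasDerivAt_id (‖x - c y‖)).const_mul (1/2 : ℝ)
        · simp only [h, if_false]
          exact hasDerivAt_const _ _
      have h2 : HasDerivAt (fun t : ℝ => Real.exp (-(1/2)*t) + A)
          (Real.exp (-(1/2)*‖x - c z‖) * (-(1/2))) ‖x - c z‖ := by
        have : HasDerivAt (fun t : ℝ => -(1/2)*t) (-(1/2)) ‖x - c z‖ := by
          simpa using (hasDerivAt_id (‖x - c z‖)).const_mul (-(1/2) : ℝ)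
        exact (this.exp).add_const A
      have hDpos : 0 < Real.exp (-(1/2)*‖x - c z‖) + A :=
        lt_of_lt_of_le (Real.exp_pos _) (le_add_of_nonneg_right hA)
      have h3 := h2.log hDpos.ne'
      have h4 := h1.add h3
      have hE : Real.exp (-(1/2)*‖x - c z‖) = Ez z := rfl
      have heq : (if z = y then (1/2:ℝ) else 0)
          + (Real.exp (-(1/2)*‖x - c z‖) * (-(1/2))) / (Real.exp (-(1/2)*‖x - c z‖) + A)
          = a := by
        rw [hadef, hp z, hE, hSA]
        ring
      rw [← heq]
      exact h4
    have hg := hasGradientAt_comp_norm_sub x (c z) (hx z) φ a hφd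
    rw [hfun, hg.gradient, norm_smul]
    have hr : (0:ℝ) < ‖x - c z‖ := norm_pos_iff.mpr (sub_ne_zero.mpr (hx z))
    rw [norm_sub_rev (c z) x, Real.norm_eq_abs, abs_mul, abs_inv, abs_norm,
      mul_assoc, inv_mul_cancel₀ hr.ne', mul_one, hadef]
  have habs : ∀ z : Fin K, |(if z = y then (1/2 : ℝ) else 0) - (1/2) * p z|
      = if z = y then (1/2) * (1 - p z) else (1/2) * p z := by
    intro z
    rcases eq_or_ne z y with h | h
    · rw [if_pos h, if_pos h, abs_of_nonneg (by linarith [hple z])]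
      ring
    · rw [if_neg h, if_neg h, abs_of_nonpos (by linarith [(hppos z).le])]
      ring
  constructor
  · rw [Finset.sum_congr rfl fun z _ => (key z).trans (habs z)]
    rw [Finset.sum_eq_add_sum_sdiff_singleton_of_mem (Finset.mem_univ y)]
    rw [if_pos rfl]
    have h1 : ∑ z ∈ Finset.univ \ {y}, (if z = y then (1/2) * (1 - p z) else (1/2) * p z)
        = ∑ z ∈ Finset.univ \ {y}, (1/2) * p z := by
      refine Finset.sum_congr rfl fun z hz => ?_
      rw [if_neg (by simpa using (Finset.mem_sdiff.mp hz).2)]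
    have h2 : ∑ z ∈ Finset.univ \ {y}, p z = 1 - p y := by
      have := Finset.sum_eq_add_sum_sdiff_singleton_of_mem (Finset.mem_univ y) p
      rw [hpsum] at this; linarith
    rw [h1, ← Finset.mul_sum, h2]
    ring
  · linarith [(hppos y).le]
end
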